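/- Let n ≥ 9 be an integer, define μ_n^−(ρ) = −1 − (n·ρ^{(n−1)²}·(1 − (1 − 1/n)·ρ^{2n−1}))/(2n−1), and let ν_n* be the unique zero of μ_n^− in [1, +∞). Then ν_n* < ((2n−1)/(n−1))^{1/(2n−2)}; equivalently, (ν_n*)^{(n²−n)/2} > ((n−1)/(2n−1))·(ν_n*)^{(n²+3n−4)/2}. -/

import Mathlib

/-- The function `μ_n^−` from the analysis of the optimal third order SSP
Runge–Kutta methods with `n²` stages. -/
noncomputable def munMinus (n : ℕ) (ρ : ℝ) : ℝ :=
  -1 - (n * ρ ^ ((n - 1) ^ 2) * (1 - (1 - 1 / (n : ℝ)) * ρ ^ (2 * n - 1))) / (2 * (n : ℝ) - 1)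

/-- **Lemma 3.17.** For `n ≥ 9`, the unique zero `ν_n*` of `μ_n^−` in `[1, ∞)`
satisfies `ν_n* < ((2n−1)/(n−1))^{1/(2n−2)}`; equivalently,
`(ν_n*)^{(n²−n)/2} > ((n−1)/(2n−1))·(ν_n*)^{(n²+3n−4)/2}`. -/
theorem nunstar_dominant_term (n : ℕ) (hn : 9 ≤ n)
    (ν : ℝ) (hν1 : 1 ≤ ν) (hν0 : munMinus n ν = 0)
    (huniq : ∀ ρ : ℝ, 1 ≤ ρ → munMinus n ρ = 0 → ρ = ν) :
    ν < ((2 * (n : ℝ) - 1) / ((n : ℝ) - 1)) ^ ((1 : ℝ) / (2 * (n : ℝ) - 2)) ∧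
      (((n : ℝ) - 1) / (2 * (n : ℝ) - 1)) * ν ^ ((n ^ 2 + 3 * n - 4) / 2) <
        ν ^ ((n ^ 2 - n) / 2) := by
  have hN : (9 : ℝ) ≤ (n : ℝ) := by exact_mod_cast hn
  have hNpos : (0 : ℝ) < (n : ℝ) := by linarith
  have h2N : (0 : ℝ) < 2 * (n : ℝ) - 1 := by linarith
  have hN1 : (0 : ℝ) < (n : ℝ) - 1 := by linarith
  set A := ν ^ ((n - 1) ^ 2) with hA
  set B := ν ^ (2 * n - 1) with hB
  have hνpos : (0 : ℝ) < ν := by linarith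
  have hApos : 0 < A := pow_pos hνpos _
  have hBpos : 0 < B := pow_pos hνpos _
  -- the basic algebraic equation satisfied by ν
  have hE : ((n : ℝ) - 1) * (A * B) = (2 * (n : ℝ) - 1) + (n : ℝ) * A := by
    have := hν0
    unfold munMinus at this
    rw [← hA, ← hB] at this
    field_simp at this
    have h3 : A * ((n : ℝ) - ((n : ℝ) - 1) * B) / ((n : ℝ) * 2 - 1) = -1 := by linarith
    rw [div_eq_iff (by linarith)] at h3
    nlinarith [h3]
  -- ν > 1
  have hν1' : 1 < ν := by
    rcases lt_or_eq_of_le hν1 with h | h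
    · exact h
    · exfalso
      rw [← h] at hA hB
      simp only [one_pow] at hA hB
      rw [hA, hB] at hE
      nlinarith
  set C := ν ^ (2 * n - 2) with hC
  have hCpos : 0 < C := pow_pos hνpos _
  have hBC : B = C * ν := by
    rw [hB, hC, ← pow_succ]
    congr 1
    omega
  have hCA : C ≤ A := by
    rw [hC, hA]
    apply pow_le_pow_right₀ hν1
    have h1 : 2 * (n - 1) ≤ (n - 1) * (n - 1) := Nat.mul_le_mul_right _ (by omega)
    have h2 : (n - 1) ^ 2 = (n - 1) * (n - 1) := sq (n - 1)
    omega
  -- key inequality : C * (N - 1) < 2N - 1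
  have hkey : C * ((n : ℝ) - 1) < 2 * (n : ℝ) - 1 := by
    by_contra h
    push_neg at h
    have e1 : ((n : ℝ) - 1) * (A * B) = (A * ν) * (C * ((n : ℝ) - 1)) := by
      rw [hBC]; ring
    have e2 : (A * ν) * (C * ((n : ℝ) - 1)) ≥ (A * ν) * (2 * (n : ℝ) - 1) := by
      apply mul_le_mul_of_nonneg_left h (by positivity)
    have e3 : (A * ν) * (2 * (n : ℝ) - 1) > A * (2 * (n : ℝ) - 1) := by
      nlinarith [mul_pos (mul_pos hApos h2N) (sub_pos.mpr hν1')]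
    have e4 : ((n : ℝ) - 1) * A ≥ ((n : ℝ) - 1) * C := by nlinarith
    have e5 : ((n : ℝ) - 1) * C ≥ 2 * (n : ℝ) - 1 := by nlinarith
    nlinarith [hE, e1, e2, e3, e4, e5]
  constructor
  · -- first part
    have hcast : ((2 * n - 2 : ℕ) : ℝ) = 2 * (n : ℝ) - 2 := by
      push_cast [Nat.cast_sub (by omega : 2 ≤ 2 * n)]; ring
    have hCrpow : C = ν ^ (2 * (n : ℝ) - 2) := by
      rw [hC, ← Real.rpow_natCast ν (2 * n - 2), hcast]
    have hlt : C < (2 * (n : ℝ) - 1) / ((n : ℝ) - 1) := by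
      rw [lt_div_iff₀ hN1]; exact hkey
    have hexp : (0 : ℝ) < (1 : ℝ) / (2 * (n : ℝ) - 2) := by
      apply div_pos one_pos; linarith
    have hmono := Real.rpow_lt_rpow (le_of_lt hCpos) hlt hexp
    rw [hCrpow, ← Real.rpow_mul (le_of_lt hνpos)] at hmono
    rw [mul_one_div, div_self (by linarith : 2 * (n : ℝ) - 2 ≠ 0), Real.rpow_one] at hmono
    exact hmono
  · -- second part
    have hexpeq : (n ^ 2 + 3 * n - 4) / 2 = (n ^ 2 - n) / 2 + (2 * n - 2) := by
      have hsq : n ^ 2 = n * n := sq n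
      obtain ⟨k, hk⟩ : ∃ k, n * n = k := ⟨_, rfl⟩
      have hnk : n ≤ k := by nlinarith
      have hdvd : 2 ∣ k - n := by
        have hsub : (n - 1) * n = k - n := by
          rw [Nat.sub_mul, one_mul, hk]
        have heven : Even ((n - 1) * n) := by
          have h := Nat.even_mul_succ_self (n - 1)
          rwa [Nat.sub_add_cancel (by omega : 1 ≤ n)] at h
        rw [hsub] at heven
        exact heven.two_dvd
      rw [hsq, hk]
      omega
    rw [hexpeq, pow_add]
    rw [← hC]
    have hPpos : 0 < ν ^ ((n ^ 2 - n) / 2) := pow_pos hνpos _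
    rw [div_mul_eq_mul_div, div_lt_iff₀ h2N]
    have h' : ν ^ ((n ^ 2 - n) / 2) * (C * ((n : ℝ) - 1)) <
        ν ^ ((n ^ 2 - n) / 2) * (2 * (n : ℝ) - 1) :=
      mul_lt_mul_of_pos_left hkey hPpos
    linear_combination h'
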